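/- Let $n \geq 1$ be an integer, let $q = 2^{2n+1}$, and let $m = q^2 + q + 1 + \varepsilon \cdot 2^{n+1}(q+1)$ where $\varepsilon \in \{1, -1\}$. Then $m$ is odd, $m \equiv 1 \pmod{3}$, and there exists a prime $r$ with $r \neq 2$, $r \neq 3$, and $v_r(m) > v_r(2n+1)$, where $v_r$ denotes the $r$-adic valuation. -/

import Mathlib

private lemma zmod_mod_eq_one (k m : ℕ) (hk : 1 < k) (h : (m : ZMod k) = 1) :
    m % k = 1 := by
  haveI : NeZero k := ⟨by omega⟩
  have h1 : ((m % k : ℕ) : ZMod k) = 1 := by rw [ZMod.natCast_mod, h]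
  have h2 : (((m % k : ℕ) : ZMod k)).val = m % k :=
    ZMod.val_cast_of_lt (Nat.mod_lt _ (by omega))
  rw [h1, ZMod.val_one_eq_one_mod] at h2
  have h3 : 1 % k = 1 := Nat.one_mod_eq_one.mpr (by omega)
  omega

/-- For `q = 2^(2n+1)` and `m = q² + q + 1 ± 2^(n+1)(q+1)` (with `n ≥ 1`),
`m` is odd, `m ≡ 1 (mod 3)`, and there is a prime `r ∉ {2,3}` with
`v_r(m) > v_r(2n+1)`. -/
theorem ree_torus_order_arith (n : ℕ) (hn : 1 ≤ n) (q : ℕ) (hq : q = 2 ^ (2 * n + 1))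
    (ε : ℤ) (hε : ε = 1 ∨ ε = -1) (m : ℕ)
    (hm : (m : ℤ) = (q : ℤ) ^ 2 + q + 1 + ε * 2 ^ (n + 1) * ((q : ℤ) + 1)) :
    Odd m ∧ m % 3 = 1 ∧
      ∃ r : ℕ, r.Prime ∧ r ≠ 2 ∧ r ≠ 3 ∧
        (2 * n + 1).factorization r < m.factorization r := by
  -- m is odd
  have hq20 : ((q : ℕ) : ZMod 2) = 0 := by
    rw [hq]
    push_cast
    have h20 : (2 : ZMod 2) = 0 := rfl
    rw [h20, zero_pow (by omega)]
  have hmod2 : m % 2 = 1 := by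
    apply zmod_mod_eq_one 2 m (by norm_num)
    have h := congrArg (fun z : ℤ => (z : ZMod 2)) hm
    push_cast at h
    rw [h, hq20]
    have h20 : (2 : ZMod 2) = 0 := rfl
    rw [h20, zero_pow (n.succ_ne_zero)]
    ring
  have hodd : Odd m := Nat.odd_iff.mpr hmod2
  -- m ≡ 1 mod 3
  have hq3 : ((q : ℕ) : ZMod 3) = 2 := by
    rw [hq]
    push_cast
    rw [pow_succ, pow_mul]
    have h41 : (2 : ZMod 3) ^ 2 = 1 := rfl
    rw [h41, one_pow, one_mul]
  have hmod3 : m % 3 = 1 := by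
    apply zmod_mod_eq_one 3 m (by norm_num)
    have h := congrArg (fun z : ℤ => (z : ZMod 3)) hm
    push_cast at h
    rw [h, hq3]
    have h30 : (2 + 1 : ZMod 3) = 0 := rfl
    rw [h30, mul_zero, add_zero]
    decide
  refine ⟨hodd, hmod3, ?_⟩
  -- m > 2n+1
  have hqbig : (2 : ℤ) * 2 ^ (n + 1) ≤ (q : ℤ) := by
    rw [hq]
    push_cast
    calc (2 : ℤ) * 2 ^ (n + 1) = 2 ^ (n + 2) := by ring
    _ ≤ 2 ^ (2 * n + 1) := by
        apply pow_le_pow_right₀ (by norm_num); omega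
  have hqn : (2 * n + 1 : ℤ) < (q : ℤ) := by
    rw [hq]
    have := (Nat.lt_two_pow_self : 2 * n + 1 < 2 ^ (2 * n + 1))
    exact_mod_cast this
  have hqpos : (0 : ℤ) < (q : ℤ) := by rw [hq]; positivity
  have htpos : (0 : ℤ) < (2 : ℤ) ^ (n + 1) := by positivity
  have hbig : (2 * n + 1 : ℤ) < (m : ℤ) := by
    have hlow : (q : ℤ) ^ 2 + q + 1 - 2 ^ (n + 1) * ((q : ℤ) + 1) ≤ (m : ℤ) := by
      rw [hm]
      rcases hε with h | h <;> rw [h] <;> nlinarith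
    nlinarith
  have hm0 : m ≠ 0 := by
    intro h; rw [h] at hbig; push_cast at hbig; omega
  have hbig' : 2 * n + 1 < m := by exact_mod_cast hbig
  -- main claim: by contradiction
  by_contra hcon
  push_neg at hcon
  have hle : m.factorization ≤ (2 * n + 1).factorization := by
    intro r
    by_cases hr : r.Prime
    · by_cases h2 : r = 2
      · subst h2
        have : ¬ (2 ∣ m) := by omega
        simp [Nat.factorization_eq_zero_of_not_dvd this]
      · by_cases h3 : r = 3
        · subst h3
          have : ¬ (3 ∣ m) := by omega
          simp [Nat.factorization_eq_zero_of_not_dvd this]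
        · exact hcon r hr h2 h3
    · simp [Nat.factorization_eq_zero_of_not_prime _ hr]
  have hdvd : m ∣ 2 * n + 1 :=
    (Nat.factorization_le_iff_dvd hm0 (by omega)).mp hle
  have := Nat.le_of_dvd (by omega) hdvd
  omega
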